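/- Let γ : ℝ → ℝ² be a T-periodic solution of ż = X(z) with X of class C², γ'(t) ≠ 0 everywhere, and define κ = (1/T)∫₀ᵀ div X(γ(t)) dt and the transversality defect E(t) = exp(∫₀ᵗ div X(γ(s)) ds − κ t). Let u(t) = E(t)/‖γ'(t)‖² and z_ε(t) = γ(t) + ε u(t) (γ'(t))⊥. Then the first-order term in ε of X(z_ε(t)) · (z_ε'(t))⊥ equals κ E(t); more precisely, d/dε [X(z_ε(t)) · (z_ε'(t))⊥] at ε = 0 equals κ E(t) for every t. -/

import Mathlib

open intervalIntegral

private lemma hasDerivAt_fst {f : ℝ → ℝ × ℝ} {f' : ℝ × ℝ} {t : ℝ}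
    (h : HasDerivAt f f' t) : HasDerivAt (fun s => (f s).1) f'.1 t := by
  simpa [Function.comp_def] using ((ContinuousLinearMap.fst ℝ ℝ ℝ).hasFDerivAt.comp_hasDerivAt t h)

private lemma hasDerivAt_snd {f : ℝ → ℝ × ℝ} {f' : ℝ × ℝ} {t : ℝ}
    (h : HasDerivAt f f' t) : HasDerivAt (fun s => (f s).2) f'.2 t := by
  simpa [Function.comp_def] using ((ContinuousLinearMap.snd ℝ ℝ ℝ).hasFDerivAt.comp_hasDerivAt t h)

theorem stmt_3 (T : ℝ) (hT : 0 < T)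
    (X : ℝ × ℝ → ℝ × ℝ) (hX : ContDiff ℝ 2 X)
    (divX : ℝ × ℝ → ℝ)
    (hdiv : ∀ z : ℝ × ℝ, divX z = (fderiv ℝ X z (1, 0)).1 + (fderiv ℝ X z (0, 1)).2)
    (γ γ' : ℝ → ℝ × ℝ)
    (hγ : ∀ t : ℝ, HasDerivAt γ (γ' t) t)
    (hsol : ∀ t : ℝ, γ' t = X (γ t))
    (hper : ∀ t : ℝ, γ (t + T) = γ t)
    (hreg : ∀ t : ℝ, γ' t ≠ 0)
    (κ : ℝ) (hκ : κ = (1 / T) * ∫ t in (0:ℝ)..T, divX (γ t))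
    (E : ℝ → ℝ)
    (hE : ∀ t : ℝ, E t = Real.exp ((∫ s in (0:ℝ)..t, divX (γ s)) - κ * t))
    (u : ℝ → ℝ)
    (hu : ∀ t : ℝ, u t = E t / ((γ' t).1 ^ 2 + (γ' t).2 ^ 2))
    (z : ℝ → ℝ → ℝ × ℝ)
    (hz : ∀ ε t : ℝ, z ε t =
      ((γ t).1 + ε * u t * (γ' t).2, (γ t).2 - ε * u t * (γ' t).1)) :
    ∀ t : ℝ, HasDerivAt
      (fun ε : ℝ =>
        (X (z ε t)).1 * (deriv (fun s => (z ε s).2) t) -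
        (X (z ε t)).2 * (deriv (fun s => (z ε s).1) t))
      (κ * E t) 0 := by
  intro t
  have hXd : Differentiable ℝ X := hX.differentiable (by norm_num)
  set A := fderiv ℝ X (γ t) with hA
  have hXA : HasFDerivAt X A (γ t) := (hXd (γ t)).hasFDerivAt
  set p : ℝ := (γ' t).1 with hp
  set q : ℝ := (γ' t).2 with hq
  set a : ℝ := (A (1, 0)).1 with ha
  set c : ℝ := (A (1, 0)).2 with hc
  set b : ℝ := (A (0, 1)).1 with hb
  set d : ℝ := (A (0, 1)).2 with hd
  -- value of A on γ' t
  have hApq : A (γ' t) = (p * a + q * b, p * c + q * d) := by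
    have : γ' t = p • ((1:ℝ), (0:ℝ)) + q • ((0:ℝ), (1:ℝ)) := by
      rw [hp, hq]; ext <;> simp
    rw [this, map_add, map_smul, map_smul]
    rw [ha, hb, hc, hd]
    ext <;> simp [mul_comm]
  -- derivative of γ'
  have hγ'd : HasDerivAt γ' (p * a + q * b, p * c + q * d) t := by
    have h1 : HasDerivAt (fun s => X (γ s)) (A (γ' t)) t :=
      hXA.comp_hasDerivAt t (hγ t)
    have heq : (fun s => X (γ s)) = γ' := (funext hsol).symm
    rw [heq] at h1
    rw [← hApq]
    exact h1
  have hp'd : HasDerivAt (fun s => (γ' s).1) (p * a + q * b) t := hasDerivAt_fst hγ'd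
  have hq'd : HasDerivAt (fun s => (γ' s).2) (p * c + q * d) t := hasDerivAt_snd hγ'd
  -- continuity of s ↦ divX (γ s)
  have hγc : Continuous γ := by
    rw [continuous_iff_continuousAt]; exact fun s => (hγ s).continuousAt
  have hfc : Continuous (fun w => fderiv ℝ X w) := hX.continuous_fderiv (by norm_num)
  have hgc : Continuous (fun s => divX (γ s)) := by
    have h1 : Continuous (fun s => fderiv ℝ X (γ s)) := hfc.comp hγc
    have h2 : Continuous (fun s => (fderiv ℝ X (γ s)) ((1:ℝ), (0:ℝ))) :=
      h1.clm_apply continuous_const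
    have h3 : Continuous (fun s => (fderiv ℝ X (γ s)) ((0:ℝ), (1:ℝ))) :=
      h1.clm_apply continuous_const
    have : (fun s => divX (γ s)) =
        fun s => (fderiv ℝ X (γ s) (1, 0)).1 + (fderiv ℝ X (γ s) (0, 1)).2 := by
      funext s; exact hdiv (γ s)
    rw [this]
    exact (h2.fst.add h3.snd)
  -- derivative of E
  set dv : ℝ := divX (γ t) with hdv
  have hId : HasDerivAt (fun r => ∫ s in (0:ℝ)..r, divX (γ s)) dv t :=
    (hgc.integral_hasStrictDerivAt 0 t).hasDerivAt
  have hEd : HasDerivAt E ((dv - κ) * E t) t := by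
    have hk : HasDerivAt (fun r : ℝ => κ * r) κ t := by
      simpa using (hasDerivAt_id t).const_mul κ
    have h1 : HasDerivAt (fun r => (∫ s in (0:ℝ)..r, divX (γ s)) - κ * r) (dv - κ) t :=
      hId.sub hk
    have h2 := h1.exp
    have h3 : HasDerivAt E
        (Real.exp ((∫ s in (0:ℝ)..t, divX (γ s)) - κ * t) * (dv - κ)) t := by
      rw [funext hE]; exact h2
    rw [← hE t] at h3
    simpa [mul_comm] using h3
  -- derivative of N = ‖γ'‖²
  set N : ℝ → ℝ := fun s => (γ' s).1 ^ 2 + (γ' s).2 ^ 2 with hN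
  have hNt : N t = p ^ 2 + q ^ 2 := by rw [hN]
  have hNne : p ^ 2 + q ^ 2 ≠ 0 := by
    intro h
    have hp0 : p = 0 := by nlinarith [sq_nonneg p, sq_nonneg q]
    have hq0 : q = 0 := by nlinarith [sq_nonneg p, sq_nonneg q]
    exact hreg t (Prod.ext_iff.mpr ⟨by simp [← hp, hp0], by simp [← hq, hq0]⟩)
  have hNd : HasDerivAt N (2 * p * (p * a + q * b) + 2 * q * (p * c + q * d)) t := by
    have h1 : HasDerivAt (fun s => (γ' s).1 ^ 2) (2 * p * (p * a + q * b)) t := by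
      have := hp'd.pow 2
      simpa [Pi.pow_def, hp, mul_comm, mul_assoc, mul_left_comm] using this
    have h2 : HasDerivAt (fun s => (γ' s).2 ^ 2) (2 * q * (p * c + q * d)) t := by
      have := hq'd.pow 2
      simpa [Pi.pow_def, hq, mul_comm, mul_assoc, mul_left_comm] using this
    exact h1.add h2
  -- derivative of u
  set u' : ℝ := ((dv - κ) * E t * (p ^ 2 + q ^ 2) -
      E t * (2 * p * (p * a + q * b) + 2 * q * (p * c + q * d))) / (p ^ 2 + q ^ 2) ^ 2
    with hu'
  have hud : HasDerivAt u u' t := by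
    have hNne' : N t ≠ 0 := by rw [hNt]; exact hNne
    have h1 := hEd.div hNd hNne'
    rw [hNt] at h1
    have hueq : u = fun s => E s / N s := funext hu
    rw [hueq, hu']
    exact h1
  -- time derivatives of z ε
  have hzd1 : ∀ ε : ℝ, deriv (fun s => (z ε s).1) t = p + ε * (u' * q + u t * (p * c + q * d)) := by
    intro ε
    have heq : (fun s => (z ε s).1) = fun s => (γ s).1 + ε * (u s * (γ' s).2) := by
      funext s; rw [hz]; ring
    rw [heq]
    have h1 : HasDerivAt (fun s => (γ s).1) p t := hasDerivAt_fst (hγ t)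
    have h2 : HasDerivAt (fun s => u s * (γ' s).2) (u' * q + u t * (p * c + q * d)) t :=
      hud.mul hq'd
    exact (h1.add (h2.const_mul ε)).deriv
  have hzd2 : ∀ ε : ℝ, deriv (fun s => (z ε s).2) t = q - ε * (u' * p + u t * (p * a + q * b)) := by
    intro ε
    have heq : (fun s => (z ε s).2) = fun s => (γ s).2 - ε * (u s * (γ' s).1) := by
      funext s; rw [hz]; ring
    rw [heq]
    have h1 : HasDerivAt (fun s => (γ s).2) q t := hasDerivAt_snd (hγ t)
    have h2 : HasDerivAt (fun s => u s * (γ' s).1) (u' * p + u t * (p * a + q * b)) t :=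
      hud.mul hp'd
    exact (h1.sub (h2.const_mul ε)).deriv
  set D1 : ℝ := u' * q + u t * (p * c + q * d) with hD1
  set D2 : ℝ := u' * p + u t * (p * a + q * b) with hD2
  -- ε-derivative of X(z ε t)
  set w : ℝ × ℝ := (u t * q, -(u t * p)) with hw
  have hzw : ∀ ε : ℝ, z ε t = γ t + ε • w := by
    intro ε
    rw [hz, hw]
    ext <;> simp [hp, hq] <;> ring
  have hAw : A w = (u t * q * a - u t * p * b, u t * q * c - u t * p * d) := by
    have : w = (u t * q) • ((1:ℝ), (0:ℝ)) + (-(u t * p)) • ((0:ℝ), (1:ℝ)) := by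
      rw [hw]; ext <;> simp
    rw [this, map_add, map_smul, map_smul, ha, hb, hc, hd]
    ext <;> simp <;> ring
  have hXzd : HasDerivAt (fun ε : ℝ => X (z ε t)) (A w) 0 := by
    have h1 : HasDerivAt (fun ε : ℝ => γ t + ε • w) w 0 := by
      simpa using ((hasDerivAt_id (0:ℝ)).smul_const w).const_add (γ t)
    have h2 : HasDerivAt (fun ε : ℝ => X (γ t + ε • w)) (A w) 0 := by
      have hXA' : HasFDerivAt X A (γ t + (0:ℝ) • w) := by simpa using hXA
      exact hXA'.comp_hasDerivAt 0 h1
    have : (fun ε : ℝ => X (z ε t)) = fun ε : ℝ => X (γ t + ε • w) := by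
      funext ε; rw [hzw]
    rw [this]; exact h2
  have hXz0 : X (z 0 t) = (p, q) := by
    rw [hzw]
    simp [← hsol t, hp, hq]
  -- assemble the ε-derivative
  have hFd : HasDerivAt
      (fun ε : ℝ =>
        (X (z ε t)).1 * (deriv (fun s => (z ε s).2) t) -
        (X (z ε t)).2 * (deriv (fun s => (z ε s).1) t))
      ((A w).1 * q + p * (-D2) - ((A w).2 * p + q * D1)) 0 := by
    have heq : (fun ε : ℝ =>
        (X (z ε t)).1 * (deriv (fun s => (z ε s).2) t) -
        (X (z ε t)).2 * (deriv (fun s => (z ε s).1) t)) =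
        fun ε : ℝ => (X (z ε t)).1 * (q - ε * D2) - (X (z ε t)).2 * (p + ε * D1) := by
      funext ε; rw [hzd1 ε, hzd2 ε]
    rw [heq]
    have hf1 : HasDerivAt (fun ε : ℝ => (X (z ε t)).1) (A w).1 0 := hasDerivAt_fst hXzd
    have hf2 : HasDerivAt (fun ε : ℝ => (X (z ε t)).2) (A w).2 0 := hasDerivAt_snd hXzd
    have hg1 : HasDerivAt (fun ε : ℝ => q - ε * D2) (-D2) 0 := by
      simpa using ((hasDerivAt_id (0:ℝ)).mul_const D2).const_sub q
    have hg2 : HasDerivAt (fun ε : ℝ => p + ε * D1) D1 0 := by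
      simpa using ((hasDerivAt_id (0:ℝ)).mul_const D1).const_add p
    have := (hf1.mul hg1).sub (hf2.mul hg2)
    have h0 : (X (z 0 t)).1 = p := by rw [hXz0]
    have h0' : (X (z 0 t)).2 = q := by rw [hXz0]
    simpa [Pi.mul_def, Pi.sub_def, h0, h0'] using this
  -- final algebra
  have hdvad : dv = a + d := by
    rw [hdv, hdiv (γ t), ← hA, ha, hd]
  have hut : u t = E t / (p ^ 2 + q ^ 2) := by rw [hu t, hp, hq]
  convert hFd using 1
  rw [hAw, hD1, hD2, hu', hut, hdvad]
  field_simp [hNne]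
  ring
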